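/- Let n = dk. Then Σ_{σ ∈ C_{S_n}(γ_n^k)} t^{exc(σ)} s^{fix(σ)} = A_k^{exc,fix}(t, (s^d + t[d−1]_t)/[d]_t) · [d]_t^k, where A_k^{exc,fix}(t,r) = Σ_{ρ ∈ S_k} t^{exc(ρ)} r^{fix(ρ)}, γ_n = (1,...,n) ∈ S_n, and [m]_t = 1 + t + ⋯ + t^{m−1}. -/

import Mathlib

open Finset Equiv

/-- The excedance number `exc(σ) = |{i : σ(i) > i}|`. -/
def excNum {n : ℕ} (σ : Equiv.Perm (Fin n)) : ℕ :=
  (Finset.univ.filter fun i : Fin n => (i : ℕ) < (σ i : ℕ)).card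

/-- The number of fixed points `fix(σ) = |{i : σ(i) = i}|`. -/
def fixNum {n : ℕ} (σ : Equiv.Perm (Fin n)) : ℕ :=
  (Finset.univ.filter fun i : Fin n => σ i = i).card

/-- The value `σ(i)`, with positions indexed by `0, …, n-1`. -/
def permVal {n : ℕ} (σ : Equiv.Perm (Fin n)) (i : ℕ) : ℕ :=
  if h : i < n then (σ ⟨i, h⟩ : ℕ) else 0

/-- The descent set of `σ` (0-indexed positions). -/
def desSet {n : ℕ} (σ : Equiv.Perm (Fin n)) : Finset ℕ :=
  (Finset.range (n - 1)).filter fun i => permVal σ (i + 1) < permVal σ i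

/-- The descent number `des(σ)`. -/
def desNum {n : ℕ} (σ : Equiv.Perm (Fin n)) : ℕ := (desSet σ).card

/-- The major index `maj(σ) = Σ_{i ∈ Des(σ)} i` (with positions counted `1, …, n-1`). -/
def majNum {n : ℕ} (σ : Equiv.Perm (Fin n)) : ℕ := ∑ i ∈ desSet σ, (i + 1)

/-- The Eulerian polynomial `A_n(t) = Σ_{σ ∈ S_n} t^{exc(σ)}`. -/
noncomputable def eulerianExc (n : ℕ) : Polynomial ℚ :=
  ∑ σ : Equiv.Perm (Fin n), Polynomial.X ^ excNum σ

/-- The Eulerian polynomial `A_n(t) = Σ_{σ ∈ S_n} t^{des(σ)}`. -/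
noncomputable def eulerianDes (n : ℕ) : Polynomial ℚ :=
  ∑ σ : Equiv.Perm (Fin n), Polynomial.X ^ desNum σ

attribute [local instance] Classical.propDecidable

open Fin.NatCast

namespace CentAux

variable {d k : ℕ}

/-- `(r, j) ↦ r + j*k` as an equivalence `Fin k × Fin d ≃ Fin (d*k)`. -/
def eKD (hd : 0 < d) (hk : 0 < k) : Fin k × Fin d ≃ Fin (d * k) where
  toFun p := ⟨p.1 + p.2 * k, by
    calc (p.1 : ℕ) + (p.2 : ℕ) * k < k + (p.2 : ℕ) * k := by
          exact Nat.add_lt_add_right p.1.isLt _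
      _ = ((p.2 : ℕ) + 1) * k := by ring
      _ ≤ d * k := Nat.mul_le_mul_right _ p.2.isLt⟩
  invFun i := (⟨i % k, Nat.mod_lt _ hk⟩, ⟨i / k, (Nat.div_lt_iff_lt_mul hk).2 i.isLt⟩)
  left_inv p := by
    ext
    · simp [Nat.add_mul_mod_self_right, Nat.mod_eq_of_lt p.1.isLt]
    · simp [Nat.add_mul_div_right _ _ hk, Nat.div_eq_of_lt p.1.isLt]
  right_inv i := by
    ext
    simp [Nat.mod_add_div']

lemma eKD_val (hd : 0 < d) (hk : 0 < k) (p : Fin k × Fin d) :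
    ((eKD hd hk p : Fin (d * k)) : ℕ) = p.1 + (p.2 : ℕ) * k := rfl

variable [NeZero d] [NeZero k]

lemma nat_add_k_mod {r j : ℕ} (hr : r < k) (hj : j < d) :
    (r + j * k + k % (d * k)) % (d * k) = r + ((j + 1 % d) % d) * k := by
  have hd : 0 < d := Nat.pos_of_ne_zero (NeZero.ne d)
  have hk : 0 < k := Nat.pos_of_ne_zero (NeZero.ne k)
  rcases Nat.lt_or_ge 1 d with h2 | h2
  · -- d ≥ 2, so k < d*k
    have hkdk : k < d * k := by
      calc k = 1 * k := (one_mul k).symm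
        _ < d * k := (Nat.mul_lt_mul_right hk).2 h2
    rw [Nat.mod_eq_of_lt hkdk, Nat.mod_eq_of_lt h2]
    rcases Nat.lt_or_ge (j + 1) d with hj1 | hj1
    · rw [Nat.mod_eq_of_lt hj1]
      have : r + j * k + k = r + (j + 1) * k := by ring
      rw [this, Nat.mod_eq_of_lt]
      calc r + (j + 1) * k < k + (j + 1) * k := by omega
        _ = (j + 1 + 1) * k := by ring
        _ ≤ d * k := Nat.mul_le_mul_right _ (by omega)
    · have hjd : j + 1 = d := by omega
      rw [hjd, Nat.mod_self, Nat.zero_mul, Nat.add_zero]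
      have : r + j * k + k = r + d * k := by rw [← hjd]; ring
      rw [this, Nat.add_mod_right, Nat.mod_eq_of_lt (by nlinarith)]
  · -- d = 1
    have hd1 : d = 1 := by omega
    subst hd1
    have hj0 : j = 0 := by omega
    subst hj0
    simp [Nat.mod_eq_of_lt hr]

lemma eKD_add_k (hd : 0 < d) (hk : 0 < k) (r : Fin k) (j : Fin d) :
    eKD hd hk (r, j) + (k : Fin (d * k)) = eKD hd hk (r, j + 1) := by
  apply Fin.ext
  rw [Fin.add_def]
  show ((r : ℕ) + (j : ℕ) * k + ((k : Fin (d*k)) : ℕ)) % (d * k)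
      = (r : ℕ) + ((j + 1 : Fin d) : ℕ) * k
  have hkv : ((k : Fin (d * k)) : ℕ) = k % (d * k) := Fin.val_natCast k (d * k)
  have hj1 : ((j + 1 : Fin d) : ℕ) = ((j : ℕ) + 1 % d) % d := by
    rw [Fin.add_def]
    simp [Fin.val_one']
  rw [hkv, hj1]
  exact nat_add_k_mod r.isLt j.isLt

lemma rot_pow (n : ℕ) [NeZero n] (m : ℕ) (i : Fin n) :
    (finRotate n ^ m) i = i + (m : Fin n) := by
  have hn := Nat.pos_of_ne_zero (NeZero.ne n)
  obtain ⟨n', rfl⟩ : ∃ n', n = n' + 1 := ⟨n - 1, by omega⟩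
  induction m generalizing i with
  | zero => simp
  | succ m ih =>
    rw [pow_succ, Perm.mul_apply, finRotate_succ_apply, ih, Nat.cast_add, Nat.cast_one]
    abel

end CentAux

namespace CentAux
variable {d k : ℕ} [NeZero d] [NeZero k]

/-- the element of the centralizer corresponding to `(ρ, c)`. -/
def sigmaOf (hd : 0 < d) (hk : 0 < k) (ρ : Perm (Fin k)) (c : Fin k → Fin d) :
    Perm (Fin (d * k)) :=
  (Equiv.permCongr (eKD hd hk)) (Equiv.prodShear ρ fun r => Equiv.addLeft (c r))

lemma sigmaOf_apply (hd : 0 < d) (hk : 0 < k) (ρ : Perm (Fin k)) (c : Fin k → Fin d)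
    (r : Fin k) (j : Fin d) :
    sigmaOf hd hk ρ c (eKD hd hk (r, j)) = eKD hd hk (ρ r, c r + j) := by
  simp [sigmaOf, Equiv.permCongr_apply]

lemma sigmaOf_comm (hd : 0 < d) (hk : 0 < k) (ρ : Perm (Fin k)) (c : Fin k → Fin d)
    (i : Fin (d * k)) :
    sigmaOf hd hk ρ c (i + (k : Fin (d * k))) = sigmaOf hd hk ρ c i + (k : Fin (d * k)) := by
  obtain ⟨⟨r, j⟩, rfl⟩ := (eKD hd hk).surjective i
  rw [eKD_add_k, sigmaOf_apply, sigmaOf_apply, eKD_add_k, add_assoc]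

lemma mem_cent_iff (σ : Perm (Fin (d * k))) :
    σ ∈ Subgroup.centralizer {finRotate (d * k) ^ k} ↔
      ∀ i, σ (i + (k : Fin (d * k))) = σ i + (k : Fin (d * k)) := by
  rw [Subgroup.mem_centralizer_singleton_iff]
  constructor
  · intro h i
    have := congrArg (fun f : Perm (Fin (d * k)) => f i) h
    simpa [Perm.mul_apply, rot_pow] using this
  · intro h
    ext i
    simpa [Perm.mul_apply, rot_pow] using congrArg Fin.val (h i)

lemma sigmaOf_mem (hd : 0 < d) (hk : 0 < k) (ρ : Perm (Fin k)) (c : Fin k → Fin d) :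
    sigmaOf hd hk ρ c ∈ Subgroup.centralizer {finRotate (d * k) ^ k} :=
  (mem_cent_iff _).2 (sigmaOf_comm hd hk ρ c)

lemma sigmaOf_injective (hd : 0 < d) (hk : 0 < k) :
    Function.Injective
      (fun p : Perm (Fin k) × (Fin k → Fin d) => sigmaOf hd hk p.1 p.2) := by
  rintro ⟨ρ, c⟩ ⟨ρ', c'⟩ h
  have h' : ∀ r : Fin k, eKD hd hk (ρ r, c r) = eKD hd hk (ρ' r, c' r) := by
    intro r
    have := congrArg (fun f : Perm (Fin (d * k)) => f (eKD hd hk (r, 0))) h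
    simpa [sigmaOf_apply] using this
  have h2 : ∀ r : Fin k, ρ r = ρ' r ∧ c r = c' r := by
    intro r
    have := (eKD hd hk).injective (h' r)
    exact ⟨congrArg Prod.fst this, congrArg Prod.snd this⟩
  ext : 1
  · exact Equiv.ext fun r => (h2 r).1
  · exact funext fun r => (h2 r).2

lemma sigmaOf_surjective (hd : 0 < d) (hk : 0 < k) (σ : Perm (Fin (d * k)))
    (hσ : σ ∈ Subgroup.centralizer {finRotate (d * k) ^ k}) :
    ∃ p : Perm (Fin k) × (Fin k → Fin d), sigmaOf hd hk p.1 p.2 = σ := by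
  have hcomm := (mem_cent_iff σ).1 hσ
  set ρ₀ : Fin k → Fin k := fun r => ((eKD hd hk).symm (σ (eKD hd hk (r, 0)))).1 with hρ₀
  set c₀ : Fin k → Fin d := fun r => ((eKD hd hk).symm (σ (eKD hd hk (r, 0)))).2 with hc₀
  have key : ∀ (r : Fin k) (j : Fin d), σ (eKD hd hk (r, j)) = eKD hd hk (ρ₀ r, c₀ r + j) := by
    have keyN : ∀ (r : Fin k) (m : ℕ),
        σ (eKD hd hk (r, (m : Fin d))) = eKD hd hk (ρ₀ r, c₀ r + (m : Fin d)) := by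
      intro r m
      induction m with
      | zero =>
        simp only [Nat.cast_zero, add_zero]
        have : (ρ₀ r, c₀ r) = (eKD hd hk).symm (σ (eKD hd hk (r, 0))) := rfl
        rw [this, Equiv.apply_symm_apply]
      | succ m ih =>
        have h1 : ((m + 1 : ℕ) : Fin d) = (m : Fin d) + 1 := by
          rw [Nat.cast_add, Nat.cast_one]
        rw [h1, ← eKD_add_k hd hk, hcomm, ih, eKD_add_k, add_assoc]
    intro r j
    have : j = ((j : ℕ) : Fin d) := (Fin.cast_val_eq_self j).symm
    rw [this]
    exact keyN r _
  have hinj : Function.Injective ρ₀ := by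
    intro r r' h
    have e1 : σ (eKD hd hk (r, -(c₀ r))) = eKD hd hk (ρ₀ r, 0) := by
      rw [key]; congr 1; rw [add_neg_cancel]
    have e2 : σ (eKD hd hk (r', -(c₀ r'))) = eKD hd hk (ρ₀ r', 0) := by
      rw [key]; congr 1; rw [add_neg_cancel]
    rw [← h] at e2
    have := (eKD hd hk).injective (σ.injective (e1.trans e2.symm))
    exact congrArg Prod.fst this
  let ρ : Perm (Fin k) := Equiv.ofBijective ρ₀ (Finite.injective_iff_bijective.1 hinj)
  refine ⟨⟨ρ, c₀⟩, ?_⟩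
  ext i
  obtain ⟨⟨r, j⟩, rfl⟩ := (eKD hd hk).surjective i
  rw [sigmaOf_apply, key]
  rfl

end CentAux

namespace CentAux

attribute [local instance] Classical.propDecidable

variable {d k : ℕ}

lemma hmod {c j : ℕ} (hc : c < d) (hj : j < d) :
    (c + j) % d = if c + j < d then c + j else c + j - d := by
  split_ifs with h
  · exact Nat.mod_eq_of_lt h
  · rw [Nat.mod_eq_sub_mod (by omega), Nat.mod_eq_of_lt (by omega)]

/-- sum of indicators of `j < m` over `range d`, `m ≤ d` -/
lemma sum_ind_lt {m : ℕ} (hm : m ≤ d) :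
    (∑ j ∈ range d, if j < m then (1 : ℕ) else 0) = m := by
  rw [Finset.range_eq_Ico, ← Finset.sum_Ico_consecutive _ (Nat.zero_le m) hm]
  have h1 : ∑ j ∈ Finset.Ico 0 m, (if j < m then (1 : ℕ) else 0) = m := by
    rw [Finset.sum_congr rfl (fun j hj => if_pos (Finset.mem_Ico.1 hj).2)]
    simp
  have h2 : ∑ j ∈ Finset.Ico m d, (if j < m then (1 : ℕ) else 0) = 0 := by
    rw [Finset.sum_congr rfl (fun j hj => if_neg (by
      have := (Finset.mem_Ico.1 hj).1; omega))]
    simp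
  rw [h1, h2]
  omega

lemma count_le {c : ℕ} (hcd : c < d) :
    (∑ j ∈ range d, if j ≤ (c + j) % d then (1 : ℕ) else 0)
      = if c = 0 then d else d - c := by
  have hcong : ∀ j ∈ range d, ((j ≤ (c + j) % d) ↔ (j < if c = 0 then d else d - c)) := by
    intro j hj
    rw [Finset.mem_range] at hj
    rw [hmod hcd hj]
    split_ifs <;> omega
  rw [Finset.sum_congr rfl (fun j hj => if_congr (hcong j hj) rfl rfl)]
  exact sum_ind_lt (by split_ifs <;> omega)

lemma count_lt {c : ℕ} (hcd : c < d) :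
    (∑ j ∈ range d, if j < (c + j) % d then (1 : ℕ) else 0)
      = if c = 0 then 0 else d - c := by
  have hcong : ∀ j ∈ range d, ((j < (c + j) % d) ↔ (j < if c = 0 then 0 else d - c)) := by
    intro j hj
    rw [Finset.mem_range] at hj
    rw [hmod hcd hj]
    split_ifs <;> omega
  rw [Finset.sum_congr rfl (fun j hj => if_congr (hcong j hj) rfl rfl)]
  exact sum_ind_lt (by split_ifs <;> omega)

/-- key linear comparison -/
lemma lin {a b j m : ℕ} (ha : a < k) (hb : b < k) :
    a + j * k < b + m * k ↔ j < m ∨ (j = m ∧ a < b) := by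
  rcases lt_trichotomy j m with h | h | h
  · have : a + j * k < b + m * k := by
      calc a + j * k < k + j * k := Nat.add_lt_add_right ha _
        _ = (j + 1) * k := by ring
        _ ≤ m * k := Nat.mul_le_mul_right _ h
        _ ≤ b + m * k := Nat.le_add_left _ _
    simp [this, h]
  · subst h
    simp [Nat.add_lt_add_iff_right]
  · have : ¬ (a + j * k < b + m * k) := by
      have : b + m * k < a + j * k := by
        calc b + m * k < k + m * k := Nat.add_lt_add_right hb _
          _ = (m + 1) * k := by ring
          _ ≤ j * k := Nat.mul_le_mul_right _ h
          _ ≤ a + j * k := Nat.le_add_left _ _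
      omega
    simp [this]
    omega

/-- excedance indicator count within one block -/
def Acnt (hd : 0 < d) (hk : 0 < k) (ρ : Perm (Fin k)) (r : Fin k) (c : Fin d) : ℕ :=
  ∑ j : Fin d,
    if ((eKD hd hk (r, j) : Fin (d * k)) : ℕ) < ((eKD hd hk (ρ r, c + j) : Fin (d * k)) : ℕ)
    then 1 else 0

/-- fixed-point indicator count within one block -/
def Fcnt (hd : 0 < d) (hk : 0 < k) (ρ : Perm (Fin k)) (r : Fin k) (c : Fin d) : ℕ :=
  ∑ j : Fin d, if eKD hd hk (ρ r, c + j) = eKD hd hk (r, j) then 1 else 0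

lemma Acnt_eq (hd : 0 < d) (hk : 0 < k) (ρ : Perm (Fin k)) (r : Fin k) (c : Fin d) :
    Acnt hd hk ρ r c =
      if (r : ℕ) < (ρ r : ℕ) then (if (c : ℕ) = 0 then d else d - (c : ℕ))
      else (if (c : ℕ) = 0 then 0 else d - (c : ℕ)) := by
  have hcpred : ∀ j : Fin d,
      (((eKD hd hk (r, j) : Fin (d * k)) : ℕ) < ((eKD hd hk (ρ r, c + j) : Fin (d * k)) : ℕ))
        ↔ ((j : ℕ) < ((c : ℕ) + (j : ℕ)) % d ∨
            ((j : ℕ) = ((c : ℕ) + (j : ℕ)) % d ∧ (r : ℕ) < (ρ r : ℕ))) := by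
    intro j
    rw [eKD_val, eKD_val]
    show (r : ℕ) + (j : ℕ) * k < (ρ r : ℕ) + ((c + j : Fin d) : ℕ) * k ↔ _
    rw [Fin.val_add]
    exact lin r.isLt (ρ r).isLt
  rw [Acnt]
  by_cases hlt : (r : ℕ) < (ρ r : ℕ)
  · rw [if_pos hlt]
    have h2 : ∀ j : Fin d,
        (((eKD hd hk (r, j) : Fin (d * k)) : ℕ) < ((eKD hd hk (ρ r, c + j) : Fin (d * k)) : ℕ))
          ↔ (j : ℕ) ≤ ((c : ℕ) + (j : ℕ)) % d := by
      intro j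
      rw [hcpred j]
      constructor
      · rintro (h | ⟨h, -⟩) <;> omega
      · intro h
        rcases Nat.lt_or_ge (j : ℕ) (((c : ℕ) + (j : ℕ)) % d) with h' | h'
        · exact Or.inl h'
        · exact Or.inr ⟨by omega, hlt⟩
    rw [Finset.sum_congr rfl (fun j _ => if_congr (h2 j) rfl rfl)]
    rw [Fin.sum_univ_eq_sum_range (fun x => if x ≤ ((c : ℕ) + x) % d then (1 : ℕ) else 0) d]
    exact count_le c.isLt
  · rw [if_neg hlt]
    have h2 : ∀ j : Fin d,
        (((eKD hd hk (r, j) : Fin (d * k)) : ℕ) < ((eKD hd hk (ρ r, c + j) : Fin (d * k)) : ℕ))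
          ↔ (j : ℕ) < ((c : ℕ) + (j : ℕ)) % d := by
      intro j
      rw [hcpred j]
      constructor
      · rintro (h | ⟨-, h⟩)
        · exact h
        · exact absurd h hlt
      · exact Or.inl
    rw [Finset.sum_congr rfl (fun j _ => if_congr (h2 j) rfl rfl)]
    rw [Fin.sum_univ_eq_sum_range (fun x => if x < ((c : ℕ) + x) % d then (1 : ℕ) else 0) d]
    exact count_lt c.isLt

lemma Fcnt_eq (hd : 0 < d) (hk : 0 < k) (ρ : Perm (Fin k)) (r : Fin k) (c : Fin d) :
    Fcnt hd hk ρ r c = if ρ r = r ∧ (c : ℕ) = 0 then d else 0 := by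
  have h2 : ∀ j : Fin d,
      (eKD hd hk (ρ r, c + j) = eKD hd hk (r, j)) ↔ (ρ r = r ∧ (c : ℕ) = 0) := by
    intro j
    constructor
    · intro h
      have := (eKD hd hk).injective h
      have h1 : ρ r = r := congrArg Prod.fst this
      have h2 : c + j = j := congrArg Prod.snd this
      have h3 : ((c : ℕ) + (j : ℕ)) % d = (j : ℕ) := by
        have := congrArg Fin.val h2
        rwa [Fin.val_add] at this
      refine ⟨h1, ?_⟩
      rw [hmod c.isLt j.isLt] at h3
      have hc := c.isLt
      have hj := j.isLt
      split_ifs at h3 <;> omega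
    · rintro ⟨h1, h0⟩
      have hcj : c + j = j := by
        apply Fin.ext
        rw [Fin.val_add, h0, Nat.zero_add, Nat.mod_eq_of_lt j.isLt]
      rw [h1, hcj]
  rw [Fcnt, Finset.sum_congr rfl (fun j _ => if_congr (h2 j) rfl rfl)]
  split_ifs with h
  · simp
  · simp

end CentAux



namespace CentAux

attribute [local instance] Classical.propDecidable

variable {d k : ℕ} [NeZero d] [NeZero k]

lemma excNum_sigmaOf (hd : 0 < d) (hk : 0 < k) (ρ : Perm (Fin k)) (c : Fin k → Fin d) :
    excNum (sigmaOf hd hk ρ c) = ∑ r : Fin k, Acnt hd hk ρ r (c r) := by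
  rw [excNum, Finset.card_filter]
  rw [← Equiv.sum_comp (eKD hd hk)
    (fun i : Fin (d * k) =>
      if (i : ℕ) < ((sigmaOf hd hk ρ c i : Fin (d * k)) : ℕ) then (1 : ℕ) else 0)]
  rw [Fintype.sum_prod_type]
  refine Finset.sum_congr rfl fun r _ => ?_
  rw [Acnt]
  refine Finset.sum_congr rfl fun j _ => ?_
  simp only [sigmaOf_apply]

lemma fixNum_sigmaOf (hd : 0 < d) (hk : 0 < k) (ρ : Perm (Fin k)) (c : Fin k → Fin d) :
    fixNum (sigmaOf hd hk ρ c) = ∑ r : Fin k, Fcnt hd hk ρ r (c r) := by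
  rw [fixNum, Finset.card_filter]
  rw [← Equiv.sum_comp (eKD hd hk)
    (fun i : Fin (d * k) => if sigmaOf hd hk ρ c i = i then (1 : ℕ) else 0)]
  rw [Fintype.sum_prod_type]
  refine Finset.sum_congr rfl fun r _ => ?_
  rw [Fcnt]
  refine Finset.sum_congr rfl fun j _ => ?_
  simp only [sigmaOf_apply]

section Ring
variable {R : Type*} [CommRing R]

lemma sum_pow_reflect (t : R) (d : ℕ) :
    ∑ x ∈ Finset.Ico 1 d, t ^ (d - x) = ∑ x ∈ Finset.Ico 1 d, t ^ x := by
  refine Finset.sum_nbij' (i := fun x => d - x) (j := fun x => d - x) ?_ ?_ ?_ ?_ ?_ <;>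
    intros a ha <;> simp only [Finset.mem_Ico] at * <;> try omega

lemma sum_Ico_pow_shift (t : R) (d : ℕ) :
    ∑ x ∈ Finset.Ico 1 d, t ^ x = t * ∑ i ∈ range (d - 1), t ^ i := by
  rw [Finset.mul_sum, Finset.sum_Ico_eq_sum_range]
  exact Finset.sum_congr rfl fun i _ => by rw [pow_add, pow_one]

lemma geom_split (t : R) {d : ℕ} (hd : 0 < d) :
    ∑ i ∈ range d, t ^ i = 1 + ∑ x ∈ Finset.Ico 1 d, t ^ x := by
  rw [Finset.range_eq_Ico, Finset.sum_eq_sum_Ico_succ_bot hd, pow_zero]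

lemma mul_geom (t : R) {d : ℕ} (hd : 0 < d) :
    t * ∑ i ∈ range d, t ^ i = t ^ d + ∑ x ∈ Finset.Ico 1 d, t ^ x := by
  have h1 : ∀ i ∈ range d, t * t ^ i = t ^ (1 + i) := fun i _ => by rw [pow_add, pow_one]
  rw [Finset.mul_sum, Finset.sum_congr rfl h1]
  have h2 := Finset.sum_Ico_eq_sum_range (fun x => t ^ x) 1 (d + 1)
  simp only [Nat.add_sub_cancel] at h2
  rw [← h2, Finset.sum_Ico_succ_top (by omega : 1 ≤ d)]
  ring

lemma sum_c (t s : R) (hd : 0 < d) (hk : 0 < k) (ρ : Perm (Fin k)) (r : Fin k) :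
    ∑ c : Fin d, t ^ Acnt hd hk ρ r c * s ^ Fcnt hd hk ρ r c =
      if ρ r = r then s ^ d + t * ∑ i ∈ range (d - 1), t ^ i
      else if (r : ℕ) < (ρ r : ℕ) then t * ∑ i ∈ range d, t ^ i
      else ∑ i ∈ range d, t ^ i := by
  rw [Finset.sum_congr rfl (fun c (_ : c ∈ univ) => by rw [Acnt_eq, Fcnt_eq])]
  rcases eq_or_ne (ρ r) r with h1 | h1
  · rw [if_pos h1]
    have hnlt : ¬ (r : ℕ) < (ρ r : ℕ) := by rw [h1]; omega
    have hval : ∀ c : Fin d,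
        t ^ (if (r : ℕ) < (ρ r : ℕ) then (if (c : ℕ) = 0 then d else d - (c : ℕ))
              else (if (c : ℕ) = 0 then 0 else d - (c : ℕ))) *
          s ^ (if ρ r = r ∧ (c : ℕ) = 0 then d else 0)
        = if (c : ℕ) = 0 then s ^ d else t ^ (d - (c : ℕ)) := by
      intro c
      rw [if_neg hnlt]
      by_cases hc : (c : ℕ) = 0
      · rw [if_pos hc, if_pos ⟨h1, hc⟩, if_pos hc, pow_zero, one_mul]
      · have hns : ¬ (ρ r = r ∧ (c : ℕ) = 0) := fun hco => hc hco.2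
        rw [if_neg hc, if_neg hns, if_neg hc, pow_zero, mul_one]
    rw [Finset.sum_congr rfl (fun c _ => hval c)]
    rw [Fin.sum_univ_eq_sum_range (fun x => if x = 0 then s ^ d else t ^ (d - x)) d]
    conv_lhs => rw [Finset.range_eq_Ico, Finset.sum_eq_sum_Ico_succ_bot hd]
    rw [if_pos rfl]
    rw [Finset.sum_congr rfl (fun x hx => if_neg (by
      have := (Finset.mem_Ico.1 hx).1; omega))]
    rw [sum_pow_reflect, sum_Ico_pow_shift]
  · rw [if_neg h1]
    rcases Nat.lt_or_ge (r : ℕ) ((ρ r : Fin k) : ℕ) with h2 | h2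
    · rw [if_pos h2]
      have hval : ∀ c : Fin d,
          t ^ (if (r : ℕ) < (ρ r : ℕ) then (if (c : ℕ) = 0 then d else d - (c : ℕ))
                else (if (c : ℕ) = 0 then 0 else d - (c : ℕ))) *
            s ^ (if ρ r = r ∧ (c : ℕ) = 0 then d else 0)
          = if (c : ℕ) = 0 then t ^ d else t ^ (d - (c : ℕ)) := by
        intro c
        have hns : ¬ (ρ r = r ∧ (c : ℕ) = 0) := fun hco => h1 hco.1
        rw [if_neg hns, pow_zero, mul_one, if_pos h2]
        by_cases hc : (c : ℕ) = 0
        · rw [if_pos hc, if_pos hc]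
        · rw [if_neg hc, if_neg hc]
      rw [Finset.sum_congr rfl (fun c _ => hval c)]
      rw [Fin.sum_univ_eq_sum_range (fun x => if x = 0 then t ^ d else t ^ (d - x)) d]
      conv_lhs => rw [Finset.range_eq_Ico, Finset.sum_eq_sum_Ico_succ_bot hd]
      rw [if_pos rfl]
      rw [Finset.sum_congr rfl (fun x hx => if_neg (by
        have := (Finset.mem_Ico.1 hx).1; omega))]
      rw [sum_pow_reflect, mul_geom t hd]
    · have hnlt : ¬ (r : ℕ) < (ρ r : ℕ) := by omega
      rw [if_neg hnlt]
      have hval : ∀ c : Fin d,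
          t ^ (if (r : ℕ) < (ρ r : ℕ) then (if (c : ℕ) = 0 then d else d - (c : ℕ))
                else (if (c : ℕ) = 0 then 0 else d - (c : ℕ))) *
            s ^ (if ρ r = r ∧ (c : ℕ) = 0 then d else 0)
          = if (c : ℕ) = 0 then 1 else t ^ (d - (c : ℕ)) := by
        intro c
        have hns : ¬ (ρ r = r ∧ (c : ℕ) = 0) := fun hco => h1 hco.1
        rw [if_neg hns, pow_zero, mul_one, if_neg hnlt]
        by_cases hc : (c : ℕ) = 0
        · rw [if_pos hc, if_pos hc, pow_zero]
        · rw [if_neg hc, if_neg hc]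
      rw [Finset.sum_congr rfl (fun c _ => hval c)]
      rw [Fin.sum_univ_eq_sum_range (fun x => if x = 0 then 1 else t ^ (d - x)) d]
      conv_lhs => rw [Finset.range_eq_Ico, Finset.sum_eq_sum_Ico_succ_bot hd]
      rw [if_pos rfl]
      rw [Finset.sum_congr rfl (fun x hx => if_neg (by
        have := (Finset.mem_Ico.1 hx).1; omega))]
      rw [sum_pow_reflect, geom_split t hd]

lemma sum_over_c (t s : R) (hd : 0 < d) (hk : 0 < k) (ρ : Perm (Fin k)) :
    ∑ c : Fin k → Fin d,
        t ^ excNum (sigmaOf hd hk ρ c) * s ^ fixNum (sigmaOf hd hk ρ c)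
      = ∏ r : Fin k,
          (if ρ r = r then s ^ d + t * ∑ i ∈ range (d - 1), t ^ i
            else if (r : ℕ) < (ρ r : ℕ) then t * ∑ i ∈ range d, t ^ i
            else ∑ i ∈ range d, t ^ i) := by
  have h1 : ∀ c : Fin k → Fin d,
      t ^ excNum (sigmaOf hd hk ρ c) * s ^ fixNum (sigmaOf hd hk ρ c)
        = ∏ r : Fin k, (t ^ Acnt hd hk ρ r (c r) * s ^ Fcnt hd hk ρ r (c r)) := by
    intro c
    rw [excNum_sigmaOf hd hk, fixNum_sigmaOf hd hk,
      ← Finset.prod_pow_eq_pow_sum, ← Finset.prod_pow_eq_pow_sum, ← Finset.prod_mul_distrib]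
  rw [Finset.sum_congr rfl (fun c (_ : c ∈ univ) => h1 c)]
  have h2 := Finset.prod_univ_sum (fun _ : Fin k => (univ : Finset (Fin d)))
    (fun r j => t ^ Acnt hd hk ρ r j * s ^ Fcnt hd hk ρ r j)
  rw [Fintype.piFinset_univ] at h2
  rw [← h2]
  exact Finset.prod_congr rfl fun r _ => sum_c t s hd hk ρ r

lemma prod_H (t b g : R) (ρ : Perm (Fin k)) :
    (∏ r : Fin k,
      (if ρ r = r then b else if (r : ℕ) < (ρ r : ℕ) then t * g else g))
      = t ^ excNum ρ * b ^ fixNum ρ * g ^ (k - fixNum ρ) := by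
  have hfix : (univ.filter fun r : Fin k => ρ r = r).card = fixNum ρ := by
    rw [Finset.card_filter, fixNum, Finset.card_filter]
    all_goals exact Finset.sum_congr rfl fun x _ => if_congr Iff.rfl rfl rfl
  have hexc : ((univ.filter fun r : Fin k => ¬ ρ r = r).filter
      fun r : Fin k => (r : ℕ) < (ρ r : ℕ)).card = excNum ρ := by
    rw [Finset.filter_filter]
    have hiff : ∀ r : Fin k, ((¬ ρ r = r) ∧ (r : ℕ) < (ρ r : ℕ)) ↔ (r : ℕ) < (ρ r : ℕ) := by
      intro r
      constructor
      · exact And.right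
      · intro h
        refine ⟨fun he => ?_, h⟩
        rw [he] at h
        omega
    rw [Finset.filter_congr (fun r _ => hiff r)]
    rw [Finset.card_filter, excNum, Finset.card_filter]
    all_goals exact Finset.sum_congr rfl fun x _ => if_congr Iff.rfl rfl rfl
  set F : Fin k → R := fun r =>
    if ρ r = r then b else if (r : ℕ) < (ρ r : ℕ) then t * g else g with hF
  have hsplit1 := Finset.prod_filter_mul_prod_filter_not (univ : Finset (Fin k))
    (fun r => ρ r = r) F
  have e1 : (∏ r ∈ univ.filter (fun r : Fin k => ρ r = r), F r) = b ^ fixNum ρ := by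
    have h : ∀ r ∈ univ.filter (fun r : Fin k => ρ r = r), F r = b := by
      intro r hr
      have h2 := (Finset.mem_filter.1 hr).2
      rw [hF]
      exact if_pos h2
    rw [Finset.prod_congr rfl h, Finset.prod_const, hfix]
  have hsplit2 := Finset.prod_filter_mul_prod_filter_not
    (univ.filter fun r : Fin k => ¬ ρ r = r) (fun r : Fin k => (r : ℕ) < (ρ r : ℕ)) F
  have e2 : (∏ r ∈ (univ.filter fun r : Fin k => ¬ ρ r = r).filter
      (fun r : Fin k => (r : ℕ) < (ρ r : ℕ)), F r) = (t * g) ^ excNum ρ := by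
    have h : ∀ r ∈ (univ.filter fun r : Fin k => ¬ ρ r = r).filter
        (fun r : Fin k => (r : ℕ) < (ρ r : ℕ)), F r = t * g := by
      intro r hr
      have hm := Finset.mem_filter.1 hr
      have hm2 := Finset.mem_filter.1 hm.1
      rw [hF]
      show (if ρ r = r then b else if (r : ℕ) < (ρ r : ℕ) then t * g else g) = t * g
      rw [if_neg hm2.2, if_pos hm.2]
    rw [Finset.prod_congr rfl h, Finset.prod_const, hexc]
  have hrest : ((univ.filter fun r : Fin k => ¬ ρ r = r).filter
      fun r : Fin k => ¬ (r : ℕ) < (ρ r : ℕ)).card = k - fixNum ρ - excNum ρ := by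
    have hpart1 := Finset.card_filter_add_card_filter_not
      (s := (univ : Finset (Fin k))) (p := fun r => ρ r = r)
    have hpart2 := Finset.card_filter_add_card_filter_not
      (s := univ.filter fun r : Fin k => ¬ ρ r = r)
      (p := fun r : Fin k => (r : ℕ) < (ρ r : ℕ))
    rw [Finset.card_univ, Fintype.card_fin] at hpart1
    rw [hfix] at hpart1
    rw [hexc] at hpart2
    omega
  have e3 : (∏ r ∈ (univ.filter fun r : Fin k => ¬ ρ r = r).filter
      (fun r : Fin k => ¬ (r : ℕ) < (ρ r : ℕ)), F r) = g ^ (k - fixNum ρ - excNum ρ) := by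
    have h : ∀ r ∈ (univ.filter fun r : Fin k => ¬ ρ r = r).filter
        (fun r : Fin k => ¬ (r : ℕ) < (ρ r : ℕ)), F r = g := by
      intro r hr
      have hm := Finset.mem_filter.1 hr
      have hm2 := Finset.mem_filter.1 hm.1
      rw [hF]
      show (if ρ r = r then b else if (r : ℕ) < (ρ r : ℕ) then t * g else g) = g
      rw [if_neg hm2.2, if_neg hm.2]
    rw [Finset.prod_congr rfl h, Finset.prod_const, hrest]
  have hle : excNum ρ + (k - fixNum ρ - excNum ρ) = k - fixNum ρ := by
    have hpart1 := Finset.card_filter_add_card_filter_not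
      (s := (univ : Finset (Fin k))) (p := fun r => ρ r = r)
    have hpart2 := Finset.card_filter_add_card_filter_not
      (s := univ.filter fun r : Fin k => ¬ ρ r = r)
      (p := fun r : Fin k => (r : ℕ) < (ρ r : ℕ))
    rw [Finset.card_univ, Fintype.card_fin] at hpart1
    rw [hfix] at hpart1
    rw [hexc] at hpart2
    omega
  calc ∏ r : Fin k, F r
      = (∏ r ∈ univ.filter (fun r : Fin k => ρ r = r), F r) *
        ((∏ r ∈ (univ.filter fun r : Fin k => ¬ ρ r = r).filter
            (fun r : Fin k => (r : ℕ) < (ρ r : ℕ)), F r) *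
          ∏ r ∈ (univ.filter fun r : Fin k => ¬ ρ r = r).filter
            (fun r : Fin k => ¬ (r : ℕ) < (ρ r : ℕ)), F r) := by
        rw [hsplit2, hsplit1]
    _ = b ^ fixNum ρ * ((t * g) ^ excNum ρ * g ^ (k - fixNum ρ - excNum ρ)) := by
        rw [e1, e2, e3]
    _ = t ^ excNum ρ * b ^ fixNum ρ * g ^ (k - fixNum ρ) := by
        rw [mul_pow, mul_assoc, ← pow_add, hle]
        ring

end Ring

end CentAux

/-- Let `n = d·k`.  Then
`Σ_{σ ∈ C_{S_n}(γ_n^k)} t^{exc(σ)} s^{fix(σ)} = A_k^{exc,fix}(t, (s^d + t[d−1]_t)/[d]_t) ⋅ [d]_t^k`,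
where `A_k^{exc,fix}(t,r) = Σ_{ρ ∈ S_k} t^{exc(ρ)} r^{fix(ρ)}` and `γ_n = (1,…,n)`; the
right-hand side is written in the cleared (polynomial) form
`Σ_{ρ ∈ S_k} t^{exc(ρ)} (s^d + t[d−1]_t)^{fix(ρ)} [d]_t^{k−fix(ρ)}`, an identity in
`ℚ[t,s]` with `t = X 0`, `s = X 1`. -/
theorem centralizer_exc_fix_sum (d k : ℕ) (hd : 0 < d) (hk : 0 < k) :
    ∑ σ ∈ Finset.univ.filter (fun σ : Equiv.Perm (Fin (d * k)) =>
        σ ∈ Subgroup.centralizer {finRotate (d * k) ^ k}),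
      (MvPolynomial.X 0 : MvPolynomial (Fin 2) ℚ) ^ excNum σ *
        MvPolynomial.X 1 ^ fixNum σ =
    ∑ ρ : Equiv.Perm (Fin k),
      (MvPolynomial.X 0 : MvPolynomial (Fin 2) ℚ) ^ excNum ρ *
        (MvPolynomial.X 1 ^ d +
          MvPolynomial.X 0 * ∑ i ∈ Finset.range (d - 1), MvPolynomial.X 0 ^ i) ^ fixNum ρ *
        (∑ i ∈ Finset.range d, (MvPolynomial.X 0 : MvPolynomial (Fin 2) ℚ) ^ i) ^
          (k - fixNum ρ) := by
  haveI : NeZero d := ⟨hd.ne'⟩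
  haveI : NeZero k := ⟨hk.ne'⟩
  have hstep : (∑ σ ∈ Finset.univ.filter (fun σ : Equiv.Perm (Fin (d * k)) =>
        σ ∈ Subgroup.centralizer {finRotate (d * k) ^ k}),
      (MvPolynomial.X 0 : MvPolynomial (Fin 2) ℚ) ^ excNum σ * MvPolynomial.X 1 ^ fixNum σ)
      = ∑ p : Equiv.Perm (Fin k) × (Fin k → Fin d),
          (MvPolynomial.X 0 : MvPolynomial (Fin 2) ℚ) ^
              excNum (CentAux.sigmaOf hd hk p.1 p.2) *
            MvPolynomial.X 1 ^ fixNum (CentAux.sigmaOf hd hk p.1 p.2) := by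
    refine (Finset.sum_nbij (i := fun p : Equiv.Perm (Fin k) × (Fin k → Fin d) =>
      CentAux.sigmaOf hd hk p.1 p.2) ?_ ?_ ?_ ?_).symm
    · intro p _
      exact Finset.mem_filter.2 ⟨Finset.mem_univ _, CentAux.sigmaOf_mem hd hk p.1 p.2⟩
    · intro p _ q _ h
      exact CentAux.sigmaOf_injective hd hk h
    · intro σ hσ
      have hmem := (Finset.mem_filter.1 (Finset.mem_coe.1 hσ)).2
      obtain ⟨p, hp⟩ := CentAux.sigmaOf_surjective hd hk σ hmem
      exact ⟨p, by simp, hp⟩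
    · intro p _
      rfl
  rw [hstep, Fintype.sum_prod_type]
  refine Finset.sum_congr rfl fun ρ _ => ?_
  rw [CentAux.sum_over_c (MvPolynomial.X 0) (MvPolynomial.X 1) hd hk ρ, CentAux.prod_H]
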